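/- If the symmetric matrix L has simple eigenvalue 0 and all other eigenvalues in (0, 4/c²), then the companion matrix M of the wave equation with 0 < c < √2 has at most 2N eigenvalues, of which exactly 2N−1 are distinct nontrivial unit-modulus values when the λ_j (j≥2) are distinct: the double eigenvalue 1 (from λ_1 = 0) and conjugate pairs e^{±iω_j} for each λ_j > 0. -/

import Mathlib

open Polynomial Matrix Complex

open Complex in
/-- If the symmetric matrix L has simple eigenvalue 0 and all other eigenvalues
distinct in (0, 4/c²), the companion matrix M of the wave equation has spectrum
consisting of exactly 2N-1 distinct unit-modulus values: the double eigenvalue 1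
(from λ₁ = 0) and conjugate pairs e^{±iω_j} for each λ_j > 0. -/
theorem companion_spectrum_structure
    (N : ℕ) [NeZero N]
    (L : Matrix (Fin N) (Fin N) ℝ) (hLsymm : L.IsSymm)
    (lam : Fin N → ℝ) (v : Fin N → Fin N → ℝ)
    (heig : ∀ j, L.mulVec (v j) = lam j • v j)
    (horth : ∀ j k, (∑ i, v j i * v k i) = if j = k then 1 else 0)
    (c : ℝ) (hc : 0 < c) (hc2 : c < Real.sqrt 2)
    (hlam0 : lam 0 = 0) (hmono : StrictMono lam)
    (hlt : ∀ j, lam j < 4 / c^2)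
    (ω : Fin N → ℝ)
    (hω : ∀ j, j ≠ 0 → 0 < ω j ∧ ω j < Real.pi ∧
          2 * Real.cos (ω j) = 2 - c^2 * lam j)
    (M : Matrix (Fin N ⊕ Fin N) (Fin N ⊕ Fin N) ℝ)
    (hM : M = Matrix.fromBlocks ((2 : ℝ) • 1 - (c^2) • L) (-1) 1 0)
    (Mc : Matrix (Fin N ⊕ Fin N) (Fin N ⊕ Fin N) ℂ)
    (hMc : Mc = M.map Complex.ofReal) :
    spectrum ℂ Mc =
      {1} ∪ (⋃ j ∈ {j : Fin N | j ≠ 0},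
        {Complex.exp (I * ω j), Complex.exp (-(I * ω j))}) ∧
    (spectrum ℂ Mc).ncard = 2 * N - 1 ∧
    (∀ α ∈ spectrum ℂ Mc, ‖α‖ = 1) ∧
    Polynomial.rootMultiplicity 1 Mc.charpoly = 2 := by
  have hN : 0 < N := Nat.pos_of_ne_zero (NeZero.ne N)
  set A : Matrix (Fin N) (Fin N) ℝ := (2 : ℝ) • 1 - (c^2) • L with hA
  set V : Matrix (Fin N) (Fin N) ℝ := Matrix.of v with hV
  set d : Fin N → ℝ := fun j => 2 - c^2 * lam j with hd
  -- real-level identities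
  have hVVt : V * Vᵀ = 1 := by
    ext j k
    simp only [Matrix.mul_apply, Matrix.transpose_apply, hV, Matrix.of_apply, Matrix.one_apply]
    exact horth j k
  have hAVt : A * Vᵀ = Vᵀ * Matrix.diagonal d := by
    ext i j
    have h := congrFun (heig j) i
    simp only [Matrix.mulVec, dotProduct, Pi.smul_apply, smul_eq_mul] at h
    simp only [Matrix.mul_apply, hA, Matrix.sub_apply, Matrix.smul_apply, Matrix.one_apply,
      Matrix.transpose_apply, hV, Matrix.of_apply, Matrix.diagonal_apply, hd, smul_eq_mul]
    rw [Finset.sum_congr rfl (fun x _ => by split_ifs <;> ring :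
      ∀ x ∈ Finset.univ, ((2 * if i = x then 1 else 0) - c ^ 2 * L i x) * v j x
        = (if i = x then 2 * v j x else 0) - c ^ 2 * (L i x * v j x)),
      Finset.sum_sub_distrib, Finset.sum_ite_eq Finset.univ i (fun k => 2 * v j k),
      ← Finset.mul_sum, h]
    simp only [mul_ite, mul_zero]
    rw [Finset.sum_ite_eq' Finset.univ j (fun x => v x i * (2 - c ^ 2 * lam x))]
    simp
    ring
  -- complexify
  set Ac : Matrix (Fin N) (Fin N) ℂ := A.map Complex.ofReal with hAcdef
  set Vc : Matrix (Fin N) (Fin N) ℂ := V.map Complex.ofReal with hVcdef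
  set μ : Fin N → ℂ := fun j => ((2 - c^2 * lam j : ℝ) : ℂ) with hμ
  have hmapfun : ⇑Complex.ofRealHom = Complex.ofReal := rfl
  have hVcVt : Vc * Vcᵀ = 1 := by
    have h := congrArg (Complex.ofRealHom.mapMatrix) hVVt
    rw [_root_.map_mul, _root_.map_one] at h
    simpa [RingHom.mapMatrix_apply, hmapfun, Matrix.transpose_map] using h
  have hAcVt : Ac * Vcᵀ = Vcᵀ * Matrix.diagonal μ := by
    have h := congrArg (Complex.ofRealHom.mapMatrix) hAVt
    rw [_root_.map_mul, _root_.map_mul] at h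
    simp only [RingHom.mapMatrix_apply, hmapfun, Matrix.transpose_map] at h
    rw [Matrix.diagonal_map (by simp)] at h
    have hμd : Matrix.diagonal (fun j => ((d j : ℝ) : ℂ)) = Matrix.diagonal μ := rfl
    rw [hμd] at h
    exact h
  -- Mc as blocks
  have hMcB : Mc = Matrix.fromBlocks Ac (-1) 1 0 := by
    rw [hMc, hM, Matrix.fromBlocks_map]
    have h1 : ((-1 : Matrix (Fin N) (Fin N) ℝ).map Complex.ofReal) = -1 := by
      ext i j; by_cases h : i = j <;> simp [h, Matrix.map_apply, Matrix.one_apply]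
    have h2 : ((1 : Matrix (Fin N) (Fin N) ℝ).map Complex.ofReal) = 1 := by
      ext i j; by_cases h : i = j <;> simp [h, Matrix.map_apply, Matrix.one_apply]
    have h3 : ((0 : Matrix (Fin N) (Fin N) ℝ).map Complex.ofReal) = 0 := by
      ext i j; simp [Matrix.map_apply]
    rw [h1, h2, h3]
  -- determinant of x•1 - Ac
  have hdetA : ∀ x : ℂ, (x • 1 - Ac).det = ∏ j, (x - μ j) := by
    intro x
    have key : Vc * (x • 1 - Ac) * Vcᵀ = x • 1 - Matrix.diagonal μ := by
      rw [Matrix.mul_sub, Matrix.sub_mul, Matrix.mul_smul, Matrix.mul_one, Matrix.smul_mul, hVcVt,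
        Matrix.mul_assoc, hAcVt, ← Matrix.mul_assoc, hVcVt, Matrix.one_mul]
    have hdet1 : Vc.det * Vcᵀ.det = 1 := by rw [← Matrix.det_mul, hVcVt, Matrix.det_one]
    have h2 : (x • 1 - Matrix.diagonal μ).det = (x • 1 - Ac).det := by
      rw [← key, Matrix.det_mul, Matrix.det_mul]
      rw [mul_comm] at hdet1
      calc Vc.det * (x • 1 - Ac).det * Vcᵀ.det
          = (Vcᵀ.det * Vc.det) * (x • 1 - Ac).det := by ring
        _ = (x • 1 - Ac).det := by rw [hdet1, one_mul]
    rw [← h2]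
    have h3 : x • (1 : Matrix (Fin N) (Fin N) ℂ) - Matrix.diagonal μ
        = Matrix.diagonal (fun j => x - μ j) := by
      ext i j
      by_cases h : i = j <;> simp [h, Matrix.diagonal_apply, Matrix.one_apply]
    rw [h3, Matrix.det_diagonal]
  -- determinant of x•1 - Mc for x ≠ 0
  have hdetM : ∀ x : ℂ, x ≠ 0 →
      (x • (1 : Matrix (Fin N ⊕ Fin N) (Fin N ⊕ Fin N) ℂ) - Mc).det
        = ∏ j, (x ^ 2 - μ j * x + 1) := by
    intro x hx
    have hblock : x • (1 : Matrix (Fin N ⊕ Fin N) (Fin N ⊕ Fin N) ℂ) - Mc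
        = Matrix.fromBlocks (x • 1 - Ac) 1 (-1) (x • 1) := by
      rw [hMcB, ← Matrix.fromBlocks_one, Matrix.fromBlocks_smul]
      rw [sub_eq_add_neg, Matrix.fromBlocks_neg, Matrix.fromBlocks_add]
      congr 1 <;> simp [sub_eq_add_neg]
    rw [hblock]
    letI : Invertible (x • (1 : Matrix (Fin N) (Fin N) ℂ)) :=
      ⟨x⁻¹ • 1, by rw [Matrix.smul_mul, Matrix.mul_smul, Matrix.mul_one, smul_smul,
          inv_mul_cancel₀ hx, one_smul], by rw [Matrix.smul_mul, Matrix.mul_smul, Matrix.mul_one,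
          smul_smul, mul_inv_cancel₀ hx, one_smul]⟩
    rw [Matrix.det_fromBlocks₂₂]
    have hinv : ⅟(x • (1 : Matrix (Fin N) (Fin N) ℂ)) = x⁻¹ • 1 := rfl
    rw [hinv]
    have h1 : (x • 1 - Ac) - 1 * (x⁻¹ • (1 : Matrix (Fin N) (Fin N) ℂ)) * (-1)
        = (x + x⁻¹) • 1 - Ac := by
      rw [Matrix.one_mul, Matrix.mul_neg, Matrix.mul_one, sub_neg_eq_add, add_smul]
      abel
    rw [h1, hdetA, Matrix.det_smul, Matrix.det_one, mul_one]
    rw [show (x : ℂ) ^ Fintype.card (Fin N) = ∏ _j : Fin N, x from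
        (Finset.prod_const x).symm ▸ (by rw [Finset.card_univ]),
      ← Finset.prod_mul_distrib]
    exact Finset.prod_congr rfl fun j _ => by field_simp; ring
  -- eval of charpoly
  have evalcp : ∀ x : ℂ, Polynomial.eval x Mc.charpoly
      = (x • (1 : Matrix (Fin N ⊕ Fin N) (Fin N ⊕ Fin N) ℂ) - Mc).det := by
    intro x
    rw [Matrix.charpoly, ← Polynomial.coe_evalRingHom, RingHom.map_det]
    congr 1
    ext i j
    by_cases h : i = j <;>
      simp [h, Matrix.charmatrix_apply, Matrix.diagonal_apply, Matrix.one_apply]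
  -- the factored charpoly
  set q : Fin N → ℂ[X] := fun j => X ^ 2 - C (μ j) * X + 1 with hq
  have hcp : Mc.charpoly = ∏ j, q j := by
    apply Polynomial.eq_of_infinite_eval_eq
    apply Set.Infinite.mono (s := {(0:ℂ)}ᶜ) _ ((Set.finite_singleton 0).infinite_compl)
    intro x hx
    have hx0 : x ≠ 0 := hx
    simp only [Set.mem_setOf_eq]
    rw [evalcp, hdetM x hx0, Polynomial.eval_prod]
    exact (Finset.prod_congr rfl fun j _ => by simp [hq]).symm
  -- exp values
  set a : Fin N → ℂ := fun j => Complex.exp (I * (ω j : ℂ)) with haa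
  set b : Fin N → ℂ := fun j => Complex.exp (-(I * (ω j : ℂ))) with hbb
  have hμcos : ∀ j, j ≠ 0 → μ j = 2 * (Real.cos (ω j) : ℂ) := by
    intro j hj
    have hcast : ((2 - c^2 * lam j : ℝ) : ℂ) = ((2 * Real.cos (ω j) : ℝ) : ℂ) :=
      congrArg Complex.ofReal (hω j hj).2.2.symm
    simp only [hμ]
    rw [hcast]
    push_cast
    ring
  have hq0 : q 0 = (X - C 1) ^ 2 := by
    have hμ0 : μ 0 = 2 := by simp only [hμ]; norm_num [hlam0]
    simp only [hq, hμ0]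
    rw [map_ofNat C 2, Polynomial.C_1]
    ring
  have hqj : ∀ j, j ≠ 0 → q j = (X - C (a j)) * (X - C (b j)) := by
    intro j hj
    have hab : a j * b j = 1 := by
      simp only [haa, hbb]
      rw [← Complex.exp_add, add_neg_cancel, Complex.exp_zero]
    have hsum : a j + b j = μ j := by
      simp only [haa, hbb]
      rw [hμcos j hj, show (I * ((ω j : ℝ):ℂ)) = ((ω j:ℝ):ℂ) * I by ring,
        show (-(((ω j:ℝ):ℂ) * I)) = ((-(ω j) : ℝ):ℂ) * I by push_cast; ring,
        Complex.exp_mul_I, Complex.exp_mul_I]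
      push_cast
      simp [Complex.cos_neg, Complex.sin_neg]
      ring_nf
    simp only [hq]
    rw [← hsum, Polynomial.C_add, show (1 : ℂ[X]) = C (a j) * C (b j) by
      rw [← Polynomial.C_mul, hab, Polynomial.C_1]]
    ring
  have hsin : ∀ j, j ≠ 0 → 0 < Real.sin (ω j) :=
    fun j hj => Real.sin_pos_of_pos_of_lt_pi (hω j hj).1 (hω j hj).2.1
  have haim : ∀ j, (a j).im = Real.sin (ω j) := by
    intro j
    simp only [haa]
    rw [show (I * ((ω j : ℝ):ℂ)) = ((ω j:ℝ):ℂ) * I by ring, Complex.exp_ofReal_mul_I_im]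
  have hbim : ∀ j, (b j).im = -Real.sin (ω j) := by
    intro j
    simp only [hbb]
    rw [show (-(I * ((ω j : ℝ):ℂ))) = ((-(ω j) : ℝ):ℂ) * I by push_cast; ring,
      Complex.exp_ofReal_mul_I_im, Real.sin_neg]
  have hare : ∀ j, (a j).re = Real.cos (ω j) := by
    intro j
    simp only [haa]
    rw [show (I * ((ω j : ℝ):ℂ)) = ((ω j:ℝ):ℂ) * I by ring, Complex.exp_ofReal_mul_I_re]
  have hbre : ∀ j, (b j).re = Real.cos (ω j) := by
    intro j
    simp only [hbb]
    rw [show (-(I * ((ω j : ℝ):ℂ))) = ((-(ω j) : ℝ):ℂ) * I by push_cast; ring,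
      Complex.exp_ofReal_mul_I_re, Real.cos_neg]
  have ha1 : ∀ j, j ≠ 0 → a j ≠ 1 := by
    intro j hj h
    have h2 := haim j
    rw [h] at h2
    exact (hsin j hj).ne' (by simpa using h2.symm)
  have hb1 : ∀ j, j ≠ 0 → b j ≠ 1 := by
    intro j hj h
    have h2 := hbim j
    rw [h] at h2
    have h3 : Real.sin (ω j) = 0 := by
      have : (0:ℝ) = -Real.sin (ω j) := by simpa using h2
      linarith
    exact (hsin j hj).ne' h3
  -- each factor is nonzero
  have hqne : ∀ j, q j ≠ 0 := by
    intro j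
    by_cases hj : j = 0
    · subst hj
      rw [hq0]
      exact pow_ne_zero _ (Polynomial.X_sub_C_ne_zero 1)
    · rw [hqj j hj]
      exact mul_ne_zero (Polynomial.X_sub_C_ne_zero _) (Polynomial.X_sub_C_ne_zero _)
  -- root multiplicity of 1
  have hprodne : (∏ j, q j) ≠ 0 := Finset.prod_ne_zero_iff.mpr fun j _ => hqne j
  have hmult : Polynomial.rootMultiplicity 1 Mc.charpoly = 2 := by
    rw [hcp, ← Polynomial.count_roots, Polynomial.roots_prod q Finset.univ hprodne,
      Multiset.count_bind]
    have : ∀ j : Fin N, Multiset.count 1 (q j).roots = if j = 0 then 2 else 0 := by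
      intro j
      by_cases hj : j = 0
      · subst hj
        rw [hq0, Polynomial.roots_pow, Polynomial.roots_X_sub_C]
        simp [Multiset.count_nsmul]
      · rw [hqj j hj, Polynomial.roots_mul (mul_ne_zero (Polynomial.X_sub_C_ne_zero _)
          (Polynomial.X_sub_C_ne_zero _)), Polynomial.roots_X_sub_C, Polynomial.roots_X_sub_C]
        simp [hj, Multiset.count_singleton, (ha1 j hj).symm, (hb1 j hj).symm]
    calc (Multiset.map (fun j => Multiset.count 1 (q j).roots) Finset.univ.val).sum
        = (Multiset.map (fun j : Fin N => if j = 0 then 2 else 0) Finset.univ.val).sum := by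
          congr 1
          exact Multiset.map_congr rfl fun j _ => this j
      _ = ∑ j : Fin N, (if j = 0 then 2 else 0) := rfl
      _ = 2 := by rw [Finset.sum_ite_eq' Finset.univ (0 : Fin N) (fun _ => 2)]; simp
  -- spectrum characterization
  have hsmul1 : ∀ x : ℂ, (algebraMap ℂ (Matrix (Fin N ⊕ Fin N) (Fin N ⊕ Fin N) ℂ)) x
      = x • 1 := by
    intro x
    rw [Matrix.algebraMap_eq_diagonal]
    ext i j
    by_cases h : i = j <;> simp [h, Matrix.diagonal_apply, Matrix.one_apply]
  have hspec : ∀ x : ℂ, x ∈ spectrum ℂ Mc ↔ Polynomial.eval x Mc.charpoly = 0 := by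
    intro x
    rw [spectrum.mem_iff, hsmul1, evalcp]
    rw [Matrix.isUnit_iff_isUnit_det]
    simp [isUnit_iff_ne_zero]
  -- evaluate the factored polynomial
  have heval0 : ∀ x : ℂ, (Polynomial.eval x Mc.charpoly = 0 ↔
      (x = 1 ∨ ∃ j, j ≠ 0 ∧ (x = a j ∨ x = b j))) := by
    intro x
    rw [hcp, Polynomial.eval_prod, Finset.prod_eq_zero_iff]
    constructor
    · rintro ⟨j, -, hj0⟩
      by_cases hj : j = 0
      · subst hj
        left
        rw [hq0] at hj0
        simp only [Polynomial.eval_pow, Polynomial.eval_sub, Polynomial.eval_X,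
          Polynomial.eval_C] at hj0
        have h2 := pow_eq_zero_iff (n := 2) (by norm_num) |>.mp hj0
        exact sub_eq_zero.mp h2
      · right
        refine ⟨j, hj, ?_⟩
        rw [hqj j hj] at hj0
        simp only [Polynomial.eval_mul, Polynomial.eval_sub, Polynomial.eval_X,
          Polynomial.eval_C, mul_eq_zero, sub_eq_zero] at hj0
        exact hj0
    · rintro (h1 | ⟨j, hj, hab2⟩)
      · exact ⟨0, Finset.mem_univ _, by rw [hq0]; simp [h1]⟩
      · refine ⟨j, Finset.mem_univ _, ?_⟩
        rw [hqj j hj]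
        simp only [Polynomial.eval_mul, Polynomial.eval_sub, Polynomial.eval_X,
          Polynomial.eval_C, mul_eq_zero, sub_eq_zero]
        exact hab2
  -- the spectrum as a set
  have hseteq : spectrum ℂ Mc
      = {(1:ℂ)} ∪ (⋃ j ∈ {j : Fin N | j ≠ 0}, {a j, b j}) := by
    ext x
    rw [hspec x, heval0 x]
    simp only [Set.mem_union, Set.mem_singleton_iff, Set.mem_iUnion, Set.mem_setOf_eq,
      Set.mem_insert_iff, exists_prop]
  -- injectivity on nonzero indices
  have hc2ne : c^2 ≠ 0 := pow_ne_zero 2 hc.ne'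
  have hlaminj : ∀ j k : Fin N, j ≠ 0 → k ≠ 0 →
      Real.cos (ω j) = Real.cos (ω k) → j = k := by
    intro j k hj hk h
    have e1 := (hω j hj).2.2
    have e2 := (hω k hk).2.2
    apply hmono.injective
    have : c^2 * lam j = c^2 * lam k := by linarith
    exact mul_left_cancel₀ hc2ne this
  set S0 : Finset (Fin N) := Finset.univ.erase (0 : Fin N) with hS0
  have hinja : Set.InjOn a ↑S0 := by
    intro j hj k hk h
    simp only [hS0, Finset.coe_erase, Set.mem_diff, Finset.coe_univ, Set.mem_univ,
      Set.mem_singleton_iff, true_and] at hj hk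
    exact hlaminj j k hj hk (by rw [← hare j, ← hare k, h])
  have hinjb : Set.InjOn b ↑S0 := by
    intro j hj k hk h
    simp only [hS0, Finset.coe_erase, Set.mem_diff, Finset.coe_univ, Set.mem_univ,
      Set.mem_singleton_iff, true_and] at hj hk
    exact hlaminj j k hj hk (by rw [← hbre j, ← hbre k, h])
  set T : Finset ℂ := insert (1:ℂ) ((S0.image a) ∪ (S0.image b)) with hT
  have hTcoe : (T : Set ℂ) = spectrum ℂ Mc := by
    rw [hseteq]
    ext x
    simp only [hT, Finset.coe_insert, Set.mem_insert_iff, Finset.coe_union, Set.mem_union,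
      Finset.coe_image, Set.mem_image, hS0, Finset.coe_erase, Set.mem_diff, Finset.coe_univ,
      Set.mem_univ, Set.mem_singleton_iff, true_and, Set.mem_iUnion, Set.mem_setOf_eq,
      exists_prop]
    constructor
    · rintro (h | ⟨j, hj, h⟩ | ⟨j, hj, h⟩)
      · exact Or.inl h
      · exact Or.inr ⟨j, hj, Or.inl h.symm⟩
      · exact Or.inr ⟨j, hj, Or.inr h.symm⟩
    · rintro (h | ⟨j, hj, h | h⟩)
      · exact Or.inl h
      · exact Or.inr (Or.inl ⟨j, hj, h.symm⟩)
      · exact Or.inr (Or.inr ⟨j, hj, h.symm⟩)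
  have hdisj : Disjoint (S0.image a) (S0.image b) := by
    rw [Finset.disjoint_left]
    rintro x hx hx'
    obtain ⟨j, hj, hja⟩ := Finset.mem_image.mp hx
    obtain ⟨k, hk, hkb⟩ := Finset.mem_image.mp hx'
    have hj0 : j ≠ 0 := Finset.ne_of_mem_erase hj
    have hk0 : k ≠ 0 := Finset.ne_of_mem_erase hk
    have h1 : x.im = Real.sin (ω j) := by rw [← hja, haim]
    have h2 : x.im = -Real.sin (ω k) := by rw [← hkb, hbim]
    have := hsin j hj0
    have := hsin k hk0
    linarith [h1 ▸ h2]
  have hnotmem : (1:ℂ) ∉ (S0.image a) ∪ (S0.image b) := by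
    intro h
    rcases Finset.mem_union.mp h with h' | h'
    · obtain ⟨j, hj, hja⟩ := Finset.mem_image.mp h'
      exact ha1 j (Finset.ne_of_mem_erase hj) hja
    · obtain ⟨j, hj, hjb⟩ := Finset.mem_image.mp h'
      exact hb1 j (Finset.ne_of_mem_erase hj) hjb
  have hncard : (spectrum ℂ Mc).ncard = 2 * N - 1 := by
    rw [← hTcoe, Set.ncard_coe_finset, hT,
      Finset.card_insert_of_notMem hnotmem, Finset.card_union_of_disjoint hdisj,
      Finset.card_image_of_injOn hinja, Finset.card_image_of_injOn hinjb, hS0,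
      Finset.card_erase_of_mem (Finset.mem_univ _), Finset.card_univ, Fintype.card_fin]
    omega
  have habs : ∀ α ∈ spectrum ℂ Mc, ‖α‖ = 1 := by
    intro α hα
    rw [hseteq] at hα
    simp only [Set.mem_union, Set.mem_singleton_iff, Set.mem_iUnion, Set.mem_setOf_eq,
      Set.mem_insert_iff, exists_prop] at hα
    rcases hα with h | ⟨j, hj, h | h⟩
    · simp [h]
    · rw [h, haa]
      rw [Complex.norm_exp]
      simp
    · rw [h, hbb]
      rw [Complex.norm_exp]
      simp
  exact ⟨hseteq, hncard, habs, hmult⟩
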